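/- (Axiomatic characterization of GCES.) Let p be a probabilistic database over D with endogenous/exogenous partition (D^en, D^ex), and let ψ be a function assigning to each monotone Boolean query Q : Finset D → {0,1} and each τ ∈ D^en a real number ψ_τ(Q). Suppose ψ satisfies: (DUM) if Δ(Q,W,τ) = 0 for every W ⊆ D^en \ {τ}, then ψ_τ(Q) = 0; (G-EFF) Σ_{τ ∈ D^en} ψ_τ(Q) = Σ_{W ⊊ D^en} Σ_{τ ∈ D^en \ W} Δ(Q,W,τ)·( p(W ∪ D^ex) + p(W ∪ D^ex ∪ {τ}) ); (G-SYM) if τ ≠ τ' and Δ(Q,W,τ) = Δ(Q,W,τ') = 0 for every W ⊆ D^en \ {τ,τ'}, then ψ_τ(Q) − Power^w(p,Q,τ) = ψ_{τ'}(Q) − Power^w(p,Q,τ'), where Power^w(p,Q,σ) := Σ_{W ⊆ D^en \ {σ}} Δ(Q,W,σ)·p(W ∪ D^ex); (LIN) ψ_τ(Q∨Q') + ψ_τ(Q∧Q') = ψ_τ(Q) + ψ_τ(Q') for all monotone Boolean Q, Q' and all τ ∈ D^en. Then ψ is unique, and ψ_τ(Q) = CE(p,Q,τ) for every monotone Boolean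 query Q and every τ ∈ D^en. -/

import Mathlib

open Finset
set_option linter.unusedSectionVars false

variable {ι : Type*} [Fintype ι] [DecidableEq ι]

/-- The positively intervened distribution `p^{+τ}`. Here the database `D` consists of all
the tuples of the finite type `ι`, and possible worlds are all `W : Finset ι`. -/
noncomputable def pPlus (p : Finset ι → ℝ) (τ : ι) (W : Finset ι) : ℝ :=
  ∑ W' ∈ Finset.univ.filter (fun W' : Finset ι => W' ∪ {τ} = W), p W'

/-- The negatively intervened distribution `p^{−τ}`. -/
noncomputable def pMinus (p : Finset ι → ℝ) (τ : ι) (W : Finset ι) : ℝ :=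
  ∑ W' ∈ Finset.univ.filter (fun W' : Finset ι => W' \ {τ} = W), p W'

/-- The generalized causal-effect score
`CE(p,Q,τ) = Σ_W p^{+τ}(W)·Q[W] − Σ_W p^{−τ}(W)·Q[W]`. -/
noncomputable def CE (p : Finset ι → ℝ) (Q : Finset ι → ℝ) (τ : ι) : ℝ :=
  ∑ W : Finset ι, pPlus p τ W * Q W - ∑ W : Finset ι, pMinus p τ W * Q W

/-- `Δ(Q,W,τ) = Q[W ∪ D^ex ∪ {τ}] − Q[W ∪ D^ex]`. -/
noncomputable def Delta (Dex : Finset ι) (Q : Finset ι → ℝ) (W : Finset ι) (τ : ι) : ℝ :=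
  Q (W ∪ Dex ∪ {τ}) - Q (W ∪ Dex)

/-- The weighted power `Power^w(p,Q,σ) = Σ_{W ⊆ D^en \ {σ}} Δ(Q,W,σ)·p(W ∪ D^ex)`. -/
noncomputable def Powerw (Den Dex : Finset ι) (p : Finset ι → ℝ)
    (Q : Finset ι → ℝ) (σ : ι) : ℝ :=
  ∑ W ∈ (Den.erase σ).powerset, Delta Dex Q W σ * p (W ∪ Dex)

/-- `Q` is a Boolean query: it takes values in `{0,1}`. -/
def IsBool (Q : Finset ι → ℝ) : Prop := ∀ W, Q W = 0 ∨ Q W = 1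

/-- `Q` is a monotone query. -/
def IsMonotone (Q : Finset ι → ℝ) : Prop := ∀ W₁ W₂ : Finset ι, W₁ ⊆ W₂ → Q W₁ ≤ Q W₂

noncomputable def nuCE (Den Dex : Finset ι) (p : Finset ι → ℝ) (Q : Finset ι → ℝ) (τ : ι) : ℝ :=
  ∑ U ∈ (Den.erase τ).powerset, Delta Dex Q U τ * (p (U ∪ Dex) + p (U ∪ Dex ∪ {τ}))

lemma CE_eq_nu (Den Dex : Finset ι) (hunion : Den ∪ Dex = Finset.univ)
    (hdisj : Disjoint Den Dex)
    (p : Finset ι → ℝ) (hexo : ∀ W : Finset ι, ¬ Dex ⊆ W → p W = 0) (Q : Finset ι → ℝ)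
    (τ : ι) (hτ : τ ∈ Den) : CE p Q τ = nuCE Den Dex p Q τ := by
  classical
  have h1 : ∑ W : Finset ι, pPlus p τ W * Q W = ∑ W' : Finset ι, p W' * Q (W' ∪ {τ}) := by
    rw [← Finset.sum_fiberwise Finset.univ (fun W' : Finset ι => W' ∪ {τ})
      (fun W' => p W' * Q (W' ∪ {τ}))]
    refine Finset.sum_congr rfl fun W _ => ?_
    rw [pPlus, Finset.sum_mul]
    refine Finset.sum_congr rfl fun W' hW' => ?_
    simp only [Finset.mem_filter] at hW'
    rw [hW'.2]
  have h2 : ∑ W : Finset ι, pMinus p τ W * Q W = ∑ W' : Finset ι, p W' * Q (W' \ {τ}) := by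
    rw [← Finset.sum_fiberwise Finset.univ (fun W' : Finset ι => W' \ {τ})
      (fun W' => p W' * Q (W' \ {τ}))]
    refine Finset.sum_congr rfl fun W _ => ?_
    rw [pMinus, Finset.sum_mul]
    refine Finset.sum_congr rfl fun W' hW' => ?_
    simp only [Finset.mem_filter] at hW'
    rw [hW'.2]
  have hCE : CE p Q τ = ∑ W' : Finset ι, p W' * (Q (W' ∪ {τ}) - Q (W' \ {τ})) := by
    rw [CE, h1, h2, ← Finset.sum_sub_distrib]
    exact Finset.sum_congr rfl fun W _ => by ring
  have h3 : ∀ f : Finset ι → ℝ,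
      (∑ W' : Finset ι, p W' * f W') = ∑ V ∈ Den.powerset, p (V ∪ Dex) * f (V ∪ Dex) := by
    intro f
    rw [← Finset.sum_filter_of_ne (s := Finset.univ) (p := fun W => Dex ⊆ W)
      (f := fun W' => p W' * f W')
      (fun W _ h => by by_contra hc; exact h (show p W * f W = 0 by rw [hexo W hc, zero_mul]))]
    refine (Finset.sum_nbij' (fun V => V ∪ Dex) (fun W => W \ Dex) ?_ ?_ ?_ ?_ ?_).symm
    · intro V hV; simp
    · intro W hW
      simp only [Finset.mem_filter, Finset.mem_univ, true_and] at hW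
      simp only [Finset.mem_powerset]
      intro x hx
      simp only [Finset.mem_sdiff] at hx
      have : x ∈ Den ∪ Dex := by rw [hunion]; exact Finset.mem_univ x
      rcases Finset.mem_union.1 this with h | h
      · exact h
      · exact absurd h hx.2
    · intro V hV
      simp only [Finset.mem_powerset] at hV
      exact Finset.union_sdiff_cancel_right (hdisj.mono_left hV)
    · intro W hW
      simp only [Finset.mem_filter, Finset.mem_univ, true_and] at hW
      exact Finset.sdiff_union_of_subset hW
    · intro V _; rfl
  have hsplit : ∀ g : Finset ι → ℝ, ∑ V ∈ Den.powerset, g V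
      = ∑ U ∈ (Den.erase τ).powerset, (g U + g (insert τ U)) := by
    intro g
    conv_lhs => rw [show Den = insert τ (Den.erase τ) from (Finset.insert_erase hτ).symm]
    rw [Finset.sum_powerset_insert (Finset.notMem_erase τ Den), ← Finset.sum_add_distrib]
  rw [hCE, h3, hsplit, nuCE]
  refine Finset.sum_congr rfl fun U hU => ?_
  simp only [Finset.mem_powerset, Finset.subset_erase] at hU
  have hτU : τ ∉ U := hU.2
  have hτDex : τ ∉ Dex := Finset.disjoint_left.1 hdisj hτ
  have e1 : insert τ U ∪ Dex = U ∪ Dex ∪ {τ} := by ext x; simp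
  have e2 : (U ∪ Dex) ∪ {τ} ∪ {τ} = U ∪ Dex ∪ {τ} := by ext x; simp
  have e3 : (U ∪ Dex ∪ {τ}) \ {τ} = U ∪ Dex := by
    ext x; simp only [Finset.mem_sdiff, Finset.mem_union, Finset.mem_singleton]
    constructor
    · rintro ⟨(h | h) | h, hx⟩ <;> tauto
    · intro h
      constructor
      · tauto
      · rintro rfl; rcases h with h | h <;> [exact hτU h; exact hτDex h]
  have e4 : (U ∪ Dex) \ {τ} = U ∪ Dex := by
    rw [Finset.sdiff_singleton_eq_erase, Finset.erase_eq_of_notMem]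
    simp [hτU, hτDex]
  rw [e1, e2, e3, e4, Delta]
  ring

lemma nu_dummy (Den Dex : Finset ι) (p Q : Finset ι → ℝ) (τ : ι)
    (h : ∀ W ⊆ Den.erase τ, Delta Dex Q W τ = 0) : nuCE Den Dex p Q τ = 0 :=
  Finset.sum_eq_zero fun U hU => by
    rw [h U (Finset.mem_powerset.1 hU), zero_mul]

lemma nu_total (Den Dex : Finset ι) (p Q : Finset ι → ℝ) :
    ∑ τ ∈ Den, nuCE Den Dex p Q τ =
      ∑ W ∈ Den.powerset.erase Den, ∑ τ ∈ Den \ W,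
        Delta Dex Q W τ * (p (W ∪ Dex) + p (W ∪ Dex ∪ {τ})) := by
  classical
  rw [Finset.sum_erase _ (by simp)]
  have hpow : ∀ τ : ι, (Den.erase τ).powerset = Den.powerset.filter (fun U => τ ∉ U) := by
    intro τ; ext U
    simp [Finset.subset_erase, and_comm]
  calc ∑ τ ∈ Den, nuCE Den Dex p Q τ
      = ∑ τ ∈ Den, ∑ U ∈ Den.powerset, (if τ ∉ U then
          Delta Dex Q U τ * (p (U ∪ Dex) + p (U ∪ Dex ∪ {τ})) else 0) := by
        refine Finset.sum_congr rfl fun τ _ => ?_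
        rw [nuCE, hpow τ, Finset.sum_filter]
    _ = ∑ U ∈ Den.powerset, ∑ τ ∈ Den, (if τ ∉ U then
          Delta Dex Q U τ * (p (U ∪ Dex) + p (U ∪ Dex ∪ {τ})) else 0) := Finset.sum_comm
    _ = ∑ U ∈ Den.powerset, ∑ τ ∈ Den \ U,
          Delta Dex Q U τ * (p (U ∪ Dex) + p (U ∪ Dex ∪ {τ})) := by
        refine Finset.sum_congr rfl fun U _ => ?_
        rw [← Finset.sum_filter, Finset.sdiff_eq_filter]

lemma nu_sub_pow (Den Dex : Finset ι) (p Q : Finset ι → ℝ) (τ : ι) :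
    nuCE Den Dex p Q τ - Powerw Den Dex p Q τ =
      ∑ U ∈ (Den.erase τ).powerset, Delta Dex Q U τ * p (U ∪ Dex ∪ {τ}) := by
  rw [nuCE, Powerw, ← Finset.sum_sub_distrib]
  exact Finset.sum_congr rfl fun U _ => by ring

lemma nu_gsym_aux (Den Dex : Finset ι) (p Q : Finset ι → ℝ) (τ τ' : ι) (hτ' : τ' ∈ Den)
    (hne : τ ≠ τ')
    (h0 : ∀ W ⊆ Den \ {τ, τ'}, Delta Dex Q W τ = 0 ∧ Delta Dex Q W τ' = 0) :
    nuCE Den Dex p Q τ - Powerw Den Dex p Q τ =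
      ∑ U ∈ (Den \ {τ, τ'}).powerset,
        (Q (insert τ (insert τ' U) ∪ Dex) - Q (U ∪ Dex)) * p (insert τ (insert τ' U) ∪ Dex) := by
  classical
  have hD : Den.erase τ = insert τ' (Den \ ({τ, τ'} : Finset ι)) := by
    ext x
    simp only [Finset.mem_erase, Finset.mem_insert, Finset.mem_sdiff, Finset.mem_singleton,
      Finset.mem_insert]
    constructor
    · rintro ⟨hx1, hx2⟩
      by_cases h : x = τ' <;> tauto
    · rintro (rfl | ⟨hx, h⟩)
      · exact ⟨hne.symm, hτ'⟩
      · tauto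
  have hτ'notin : τ' ∉ Den \ ({τ, τ'} : Finset ι) := by simp
  rw [nu_sub_pow, hD, Finset.sum_powerset_insert hτ'notin]
  have hz : ∑ U ∈ (Den \ ({τ, τ'} : Finset ι)).powerset,
      Delta Dex Q U τ * p (U ∪ Dex ∪ {τ}) = 0 :=
    Finset.sum_eq_zero fun U hU => by
      rw [(h0 U (Finset.mem_powerset.1 hU)).1, zero_mul]
  rw [hz, zero_add]
  refine Finset.sum_congr rfl fun U hU => ?_
  have hU' := Finset.mem_powerset.1 hU
  have hττ'U : insert τ' U ∪ Dex ∪ {τ} = insert τ (insert τ' U) ∪ Dex := by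
    ext x; simp; tauto
  have h2 : insert τ' U ∪ Dex = U ∪ Dex ∪ {τ'} := by
    ext x; simp
  have h3 : Q (U ∪ Dex ∪ {τ'}) = Q (U ∪ Dex) := by
    have := (h0 U hU').2
    rw [Delta] at this
    linarith
  rw [Delta, hττ'U, h2, h3]

lemma nu_gsym (Den Dex : Finset ι) (p Q : Finset ι → ℝ) (τ τ' : ι)
    (hτ : τ ∈ Den) (hτ' : τ' ∈ Den) (hne : τ ≠ τ')
    (h0 : ∀ W ⊆ Den \ {τ, τ'}, Delta Dex Q W τ = 0 ∧ Delta Dex Q W τ' = 0) :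
    nuCE Den Dex p Q τ - Powerw Den Dex p Q τ =
      nuCE Den Dex p Q τ' - Powerw Den Dex p Q τ' := by
  rw [nu_gsym_aux Den Dex p Q τ τ' hτ' hne h0,
    nu_gsym_aux Den Dex p Q τ' τ hτ hne.symm
      (by intro W hW
          rw [Finset.pair_comm τ' τ] at hW
          exact ⟨(h0 W hW).2, (h0 W hW).1⟩)]
  rw [Finset.pair_comm τ' τ]
  refine Finset.sum_congr rfl fun U hU => ?_
  rw [Finset.insert_comm]

lemma nu_lin (Den Dex : Finset ι) (p Q Q' : Finset ι → ℝ) (τ : ι) :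
    nuCE Den Dex p (fun W => max (Q W) (Q' W)) τ + nuCE Den Dex p (fun W => min (Q W) (Q' W)) τ =
      nuCE Den Dex p Q τ + nuCE Den Dex p Q' τ := by
  rw [nuCE, nuCE, nuCE, nuCE, ← Finset.sum_add_distrib, ← Finset.sum_add_distrib]
  refine Finset.sum_congr rfl fun U _ => ?_
  simp only [Delta]
  have h1 := max_add_min (Q (U ∪ Dex ∪ {τ})) (Q' (U ∪ Dex ∪ {τ}))
  have h2 := max_add_min (Q (U ∪ Dex)) (Q' (U ∪ Dex))
  linear_combination (p (U ∪ Dex) + p (U ∪ Dex ∪ {τ})) * h1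
    - (p (U ∪ Dex) + p (U ∪ Dex ∪ {τ})) * h2

open Classical in
noncomputable def MinWin (Q : Finset ι → ℝ) : Finset (Finset ι) :=
  Finset.univ.filter (fun W => Q W = 1 ∧ ∀ V : Finset ι, Q V = 1 → V ⊆ W → V = W)

lemma mem_minWin_iff {Q : Finset ι → ℝ} {W : Finset ι} :
    W ∈ MinWin Q ↔ Q W = 1 ∧ ∀ V : Finset ι, Q V = 1 → V ⊆ W → V = W := by
  classical
  simp [MinWin]

lemma exists_minWin {Q : Finset ι → ℝ} (W : Finset ι) :
    Q W = 1 → ∃ T ∈ MinWin Q, T ⊆ W := by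
  induction W using Finset.strongInductionOn with
  | _ W ih =>
    intro hW
    by_cases hmin : ∀ V : Finset ι, Q V = 1 → V ⊆ W → V = W
    · exact ⟨W, mem_minWin_iff.2 ⟨hW, hmin⟩, Finset.Subset.refl W⟩
    · push_neg at hmin
      obtain ⟨V, hV1, hVW, hne⟩ := hmin
      obtain ⟨T, hT, hTV⟩ := ih V (Finset.ssubset_iff_subset_ne.2 ⟨hVW, hne⟩) hV1
      exact ⟨T, hT, hTV.trans hVW⟩

lemma winning_iff {Q : Finset ι → ℝ} (hB : IsBool Q) (hM : IsMonotone Q) (W : Finset ι) :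
    Q W = 1 ↔ ∃ T ∈ MinWin Q, T ⊆ W := by
  constructor
  · exact exists_minWin W
  · rintro ⟨T, hT, hTW⟩
    have h1 : Q T = 1 := (mem_minWin_iff.1 hT).1
    have h2 := hM T W hTW
    rcases hB W with h | h
    · rw [h1, h] at h2; linarith
    · exact h

lemma bool_max {Q Q' : Finset ι → ℝ} (hB : IsBool Q) (hB' : IsBool Q') :
    IsBool (fun W => max (Q W) (Q' W)) := by
  intro W
  rcases hB W with h | h <;> rcases hB' W with h' | h' <;> simp [h, h']
lemma bool_min {Q Q' : Finset ι → ℝ} (hB : IsBool Q) (hB' : IsBool Q') :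
    IsBool (fun W => min (Q W) (Q' W)) := by
  intro W
  rcases hB W with h | h <;> rcases hB' W with h' | h' <;> simp [h, h']
lemma mono_max {Q Q' : Finset ι → ℝ} (hM : IsMonotone Q) (hM' : IsMonotone Q') :
    IsMonotone (fun W => max (Q W) (Q' W)) :=
  fun W₁ W₂ h => max_le_max (hM W₁ W₂ h) (hM' W₁ W₂ h)
lemma mono_min {Q Q' : Finset ι → ℝ} (hM : IsMonotone Q) (hM' : IsMonotone Q') :
    IsMonotone (fun W => min (Q W) (Q' W)) :=
  fun W₁ W₂ h => min_le_min (hM W₁ W₂ h) (hM' W₁ W₂ h)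

lemma bool_ind (S : Finset ι) : IsBool (fun W : Finset ι => if S ⊆ W then (1:ℝ) else 0) := by
  intro W; by_cases h : S ⊆ W <;> simp [h]
lemma mono_ind (S : Finset ι) : IsMonotone (fun W : Finset ι => if S ⊆ W then (1:ℝ) else 0) := by
  intro W₁ W₂ h
  by_cases h1 : S ⊆ W₁
  · simp [h1, h1.trans h]
  · by_cases h2 : S ⊆ W₂ <;> simp [h1, h2]

open Classical in
lemma bool_ind2 (M : Finset (Finset ι)) :
    IsBool (fun W : Finset ι => if ∃ T ∈ M, T ⊆ W then (1:ℝ) else 0) := by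
  intro W; by_cases h : ∃ T ∈ M, T ⊆ W <;> simp [h]
open Classical in
lemma mono_ind2 (M : Finset (Finset ι)) :
    IsMonotone (fun W : Finset ι => if ∃ T ∈ M, T ⊆ W then (1:ℝ) else 0) := by
  intro W₁ W₂ h
  by_cases h1 : ∃ T ∈ M, T ⊆ W₁
  · have h2 : ∃ T ∈ M, T ⊆ W₂ := by
      obtain ⟨T, hT, hTW⟩ := h1
      exact ⟨T, hT, hTW.trans h⟩
    simp [h1, h2]
  · by_cases h2 : ∃ T ∈ M, T ⊆ W₂ <;> simp [h1, h2]

lemma ind_eq_one_iff (c : Prop) [Decidable c] : (if c then (1:ℝ) else 0) = 1 ↔ c := by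
  by_cases h : c <;> simp [h]

open Classical in
lemma decomp_max {Q : Finset ι → ℝ} (hB : IsBool Q) (hM : IsMonotone Q) {S : Finset ι}
    (hS : S ∈ MinWin Q) :
    Q = fun W => max (if S ⊆ W then (1:ℝ) else 0)
      (if ∃ T ∈ (MinWin Q).erase S, T ⊆ W then (1:ℝ) else 0) := by
  funext W
  rcases hB W with h | h
  · rw [h]
    have h1 : ¬ S ⊆ W := by
      intro hc
      have := hM S W hc
      rw [(mem_minWin_iff.1 hS).1, h] at this; linarith
    have h2 : ¬ ∃ T ∈ (MinWin Q).erase S, T ⊆ W := by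
      rintro ⟨T, hT, hTW⟩
      have := hM T W hTW
      rw [(mem_minWin_iff.1 (Finset.mem_of_mem_erase hT)).1, h] at this; linarith
    rw [if_neg h1, if_neg h2, max_self]
  · rw [h]
    obtain ⟨T, hT, hTW⟩ := (winning_iff hB hM W).1 h
    by_cases hTS : T = S
    · subst hTS
      rw [if_pos hTW]
      exact (max_eq_left (by split <;> norm_num)).symm
    · have h2 : ∃ T' ∈ (MinWin Q).erase S, T' ⊆ W := ⟨T, Finset.mem_erase.2 ⟨hTS, hT⟩, hTW⟩
      rw [if_pos h2]
      exact (max_eq_right (by split <;> norm_num)).symm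

open Classical in
lemma decomp_single {Q : Finset ι → ℝ} (hB : IsBool Q) (hM : IsMonotone Q) {S : Finset ι}
    (hS : S ∈ MinWin Q) (hempty : (MinWin Q).erase S = ∅) :
    Q = fun W => if S ⊆ W then (1:ℝ) else 0 := by
  funext W
  by_cases h : S ⊆ W
  · rw [if_pos h]
    exact (winning_iff hB hM W).2 ⟨S, hS, h⟩
  · rw [if_neg h]
    rcases hB W with h' | h'
    · exact h'
    · obtain ⟨T, hT, hTW⟩ := (winning_iff hB hM W).1 h'
      have : T = S := by
        by_contra hc
        have : T ∈ (MinWin Q).erase S := Finset.mem_erase.2 ⟨hc, hT⟩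
        rw [hempty] at this; exact absurd this (Finset.notMem_empty T)
      exact absurd (this ▸ hTW) h

open Classical in
lemma minwin_Q2_subset (Q : Finset ι → ℝ) (S : Finset ι) :
    MinWin (fun W : Finset ι => if ∃ T ∈ (MinWin Q).erase S, T ⊆ W then (1:ℝ) else 0)
      ⊆ (MinWin Q).erase S := by
  intro W hW
  obtain ⟨hW1, hW2⟩ := mem_minWin_iff.1 hW
  obtain ⟨T, hT, hTW⟩ := (ind_eq_one_iff _).1 hW1
  have hT1 : (if ∃ T' ∈ (MinWin Q).erase S, T' ⊆ T then (1:ℝ) else 0) = 1 :=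
    (ind_eq_one_iff _).2 ⟨T, hT, Finset.Subset.refl T⟩
  rwa [hW2 T hT1 hTW] at hT

open Classical in
lemma minwin_min_subset (Q : Finset ι → ℝ) (S : Finset ι) :
    MinWin (fun W : Finset ι => min (if S ⊆ W then (1:ℝ) else 0)
        (if ∃ T ∈ (MinWin Q).erase S, T ⊆ W then (1:ℝ) else 0))
      ⊆ ((MinWin Q).erase S).image (fun T => S ∪ T) := by
  intro W hW
  obtain ⟨hW1, hW2⟩ := mem_minWin_iff.1 hW
  have hW1' : min (if S ⊆ W then (1:ℝ) else 0)
      (if ∃ T ∈ (MinWin Q).erase S, T ⊆ W then (1:ℝ) else 0) = 1 := hW1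
  have hboth : S ⊆ W ∧ ∃ T ∈ (MinWin Q).erase S, T ⊆ W := by
    by_cases h1 : S ⊆ W
    · by_cases h2 : ∃ T ∈ (MinWin Q).erase S, T ⊆ W
      · exact ⟨h1, h2⟩
      · rw [if_pos h1, if_neg h2] at hW1'; norm_num at hW1'
    · rw [if_neg h1] at hW1'
      exfalso
      have hle := min_le_left (0:ℝ) (if ∃ T ∈ (MinWin Q).erase S, T ⊆ W then (1:ℝ) else 0)
      rw [hW1'] at hle; norm_num at hle
  obtain ⟨hSW, T, hT, hTW⟩ := hboth
  have hval : (fun W : Finset ι => min (if S ⊆ W then (1:ℝ) else 0)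
      (if ∃ T ∈ (MinWin Q).erase S, T ⊆ W then (1:ℝ) else 0)) (S ∪ T) = 1 := by
    have e1 : S ⊆ S ∪ T := Finset.subset_union_left
    have e2 : ∃ T' ∈ (MinWin Q).erase S, T' ⊆ S ∪ T := ⟨T, hT, Finset.subset_union_right⟩
    simp only [if_pos e1, if_pos e2, min_self]
  have := hW2 (S ∪ T) hval (Finset.union_subset hSW hTW)
  exact Finset.mem_image.2 ⟨T, hT, this⟩

/-- (Axiomatic characterization of the GCES.) If a score function `ψ` on monotone Boolean
queries satisfies DUM, G-EFF, G-SYM and LIN with respect to the PDB `p` over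
`D = D^en ∪ D^ex`, then `ψ` coincides with the generalized causal-effect score on every
monotone Boolean query and every endogenous tuple; in particular such a `ψ` is unique. -/
theorem stmt7 (Den Dex : Finset ι)
    (hunion : Den ∪ Dex = Finset.univ) (hdisj : Disjoint Den Dex)
    (p : Finset ι → ℝ)
    (hp0 : ∀ W : Finset ι, 0 ≤ p W)
    (hp1 : ∑ W : Finset ι, p W = 1)
    (hexo : ∀ W : Finset ι, ¬ Dex ⊆ W → p W = 0)
    (ψ : (Finset ι → ℝ) → ι → ℝ)
    (hDUM : ∀ Q : Finset ι → ℝ, IsBool Q → IsMonotone Q → ∀ τ ∈ Den,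
      (∀ W ⊆ Den.erase τ, Delta Dex Q W τ = 0) → ψ Q τ = 0)
    (hGEFF : ∀ Q : Finset ι → ℝ, IsBool Q → IsMonotone Q →
      ∑ τ ∈ Den, ψ Q τ =
        ∑ W ∈ Den.powerset.erase Den, ∑ τ ∈ Den \ W,
          Delta Dex Q W τ * (p (W ∪ Dex) + p (W ∪ Dex ∪ {τ})))
    (hGSYM : ∀ Q : Finset ι → ℝ, IsBool Q → IsMonotone Q →
      ∀ τ ∈ Den, ∀ τ' ∈ Den, τ ≠ τ' →
      (∀ W ⊆ Den \ {τ, τ'}, Delta Dex Q W τ = 0 ∧ Delta Dex Q W τ' = 0) →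
      ψ Q τ - Powerw Den Dex p Q τ = ψ Q τ' - Powerw Den Dex p Q τ')
    (hLIN : ∀ Q Q' : Finset ι → ℝ, IsBool Q → IsMonotone Q → IsBool Q' → IsMonotone Q' →
      ∀ τ ∈ Den,
      ψ (fun W => max (Q W) (Q' W)) τ + ψ (fun W => min (Q W) (Q' W)) τ =
        ψ Q τ + ψ Q' τ) :
    ∀ Q : Finset ι → ℝ, IsBool Q → IsMonotone Q → ∀ τ ∈ Den, ψ Q τ = CE p Q τ := by

  classical
  -- base case: indicator queries
  have base : ∀ S : Finset ι, ∀ τ ∈ Den,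
      ψ (fun W => if S ⊆ W then (1:ℝ) else 0) τ
        = nuCE Den Dex p (fun W => if S ⊆ W then (1:ℝ) else 0) τ := by
    intro S
    set Q : Finset ι → ℝ := fun W => if S ⊆ W then (1:ℝ) else 0 with hQdef
    have hB : IsBool Q := bool_ind S
    have hM : IsMonotone Q := mono_ind S
    have hdum : ∀ σ ∈ Den, σ ∉ S → ∀ W : Finset ι, Delta Dex Q W σ = 0 := by
      intro σ hσ hσS W
      have hiff : (S ⊆ W ∪ Dex ∪ {σ}) ↔ S ⊆ W ∪ Dex := by
        constructor
        · intro h x hx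
          have hx' := h hx
          simp only [Finset.mem_union, Finset.mem_singleton] at hx' ⊢
          rcases hx' with (h' | h') | h'
          · exact Or.inl h'
          · exact Or.inr h'
          · subst h'; exact absurd hx hσS
        · intro h; exact h.trans Finset.subset_union_left
      rw [Delta]
      simp only [hQdef]
      rw [if_congr hiff rfl rfl, sub_self]
    have hnud : ∀ σ ∈ Den, σ ∉ S → ψ Q σ = 0 ∧ nuCE Den Dex p Q σ = 0 := by
      intro σ hσ hσS
      exact ⟨hDUM Q hB hM σ hσ (fun W _ => hdum σ hσ hσS W),
        nu_dummy Den Dex p Q σ (fun W _ => hdum σ hσ hσS W)⟩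
    have hsym0 : ∀ σ ∈ Den, ∀ σ' ∈ Den, σ ∈ S → σ' ∈ S → σ ≠ σ' →
        ∀ W ⊆ Den \ {σ, σ'}, Delta Dex Q W σ = 0 ∧ Delta Dex Q W σ' = 0 := by
      intro σ hσ σ' hσ' hσS hσ'S hne W hW
      have hWsub : ∀ x ∈ W, x ∈ Den ∧ x ≠ σ ∧ x ≠ σ' := by
        intro x hx
        have hx' := hW hx
        simp only [Finset.mem_sdiff, Finset.mem_insert, Finset.mem_singleton] at hx'
        tauto
      have hnotin : ∀ a, a ∈ Den → a ∉ W → a ∈ S → ¬ S ⊆ W ∪ Dex := by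
        intro a ha haW haS hc
        have := hc haS
        simp only [Finset.mem_union] at this
        rcases this with h | h
        · exact haW h
        · exact (Finset.disjoint_left.1 hdisj ha) h
      have hnotin2 : ∀ a b, b ∈ Den → b ∉ W → b ∈ S → b ≠ a → ¬ S ⊆ W ∪ Dex ∪ {a} := by
        intro a b hb hbW hbS hba hc
        have := hc hbS
        simp only [Finset.mem_union, Finset.mem_singleton] at this
        rcases this with (h | h) | h
        · exact hbW h
        · exact (Finset.disjoint_left.1 hdisj hb) h
        · exact hba h
      have hσW : σ ∉ W := fun h => ((hWsub σ h).2.1 rfl)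
      have hσ'W : σ' ∉ W := fun h => ((hWsub σ' h).2.2 rfl)
      constructor
      · rw [Delta]
        simp only [hQdef]
        rw [if_neg (hnotin2 σ σ' hσ' hσ'W hσ'S hne.symm), if_neg (hnotin σ hσ hσW hσS),
          sub_self]
      · rw [Delta]
        simp only [hQdef]
        rw [if_neg (hnotin2 σ' σ hσ hσW hσS hne), if_neg (hnotin σ' hσ' hσ'W hσ'S),
          sub_self]
    intro τ hτ
    by_cases hτS : τ ∈ S
    · have hsum : ∑ σ ∈ Den, (ψ Q σ - nuCE Den Dex p Q σ) = 0 := by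
        rw [Finset.sum_sub_distrib, hGEFF Q hB hM, nu_total]; ring
      have hconst : ∀ σ ∈ Den, σ ∈ S → ψ Q σ - nuCE Den Dex p Q σ
          = ψ Q τ - nuCE Den Dex p Q τ := by
        intro σ hσ hσS
        by_cases hst : σ = τ
        · rw [hst]
        · have h1 := hGSYM Q hB hM σ hσ τ hτ hst (hsym0 σ hσ τ hτ hσS hτS hst)
          have h2 := nu_gsym Den Dex p Q σ τ hσ hτ hst (hsym0 σ hσ τ hτ hσS hτS hst)
          unfold Powerw at h1 h2
          linarith
      have hzero : ∀ σ ∈ Den, σ ∉ S → ψ Q σ - nuCE Den Dex p Q σ = 0 := fun σ hσ h => by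
        rw [(hnud σ hσ h).1, (hnud σ hσ h).2, sub_self]
      have hfil : ∑ σ ∈ Den.filter (· ∈ S), (ψ Q σ - nuCE Den Dex p Q σ) = 0 := by
        rw [Finset.sum_filter_of_ne
          (fun σ hσ h => by by_contra hc; exact h (hzero σ hσ hc)), hsum]
      have hcard : ∑ σ ∈ Den.filter (· ∈ S), (ψ Q σ - nuCE Den Dex p Q σ)
          = (Den.filter (· ∈ S)).card • (ψ Q τ - nuCE Den Dex p Q τ) := by
        rw [Finset.sum_congr rfl
          (fun σ hσ => hconst σ (Finset.mem_of_mem_filter σ hσ) (Finset.mem_filter.1 hσ).2),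
          Finset.sum_const]
      have hτmem : τ ∈ Den.filter (· ∈ S) := Finset.mem_filter.2 ⟨hτ, hτS⟩
      have hpos : 0 < (Den.filter (· ∈ S)).card := Finset.card_pos.2 ⟨τ, hτmem⟩
      rw [hcard, nsmul_eq_mul] at hfil
      have hne0 : ((Den.filter (· ∈ S)).card : ℝ) ≠ 0 := by
        exact_mod_cast hpos.ne'
      rcases mul_eq_zero.1 hfil with h | h
      · exact absurd h hne0
      · linarith
    · rw [(hnud τ hτ hτS).1, (hnud τ hτ hτS).2]
  have zero_case : ∀ Q : Finset ι → ℝ, IsBool Q → IsMonotone Q → MinWin Q = ∅ →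
      ∀ τ ∈ Den, ψ Q τ = nuCE Den Dex p Q τ := by
    intro Q hB hM hemp τ hτ
    have hzero : ∀ W : Finset ι, Q W = 0 := by
      intro W
      rcases hB W with h | h
      · exact h
      · obtain ⟨T, hT, _⟩ := (winning_iff hB hM W).1 h
        rw [hemp] at hT; exact absurd hT (Finset.notMem_empty T)
    have hdel : ∀ W ⊆ Den.erase τ, Delta Dex Q W τ = 0 := by
      intro W _; rw [Delta, hzero, hzero, sub_self]
    rw [hDUM Q hB hM τ hτ hdel, nu_dummy Den Dex p Q τ hdel]
  have main : ∀ n : ℕ, ∀ Q : Finset ι → ℝ, IsBool Q → IsMonotone Q →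
      (MinWin Q).card ≤ n → ∀ τ ∈ Den, ψ Q τ = nuCE Den Dex p Q τ := by
    intro n
    induction n with
    | zero =>
      intro Q hB hM hcard τ hτ
      exact zero_case Q hB hM (Finset.card_eq_zero.1 (Nat.le_zero.1 hcard)) τ hτ
    | succ n ih =>
      intro Q hB hM hcard τ hτ
      by_cases hemp : MinWin Q = ∅
      · exact zero_case Q hB hM hemp τ hτ
      · obtain ⟨S, hS⟩ := Finset.nonempty_iff_ne_empty.2 hemp
        by_cases h1 : (MinWin Q).erase S = ∅
        · rw [decomp_single hB hM hS h1]
          exact base S τ hτ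
        · set Q₁ : Finset ι → ℝ := fun W => if S ⊆ W then (1:ℝ) else 0 with hQ1
          set Q₂ : Finset ι → ℝ :=
            fun W => if ∃ T ∈ (MinWin Q).erase S, T ⊆ W then (1:ℝ) else 0 with hQ2
          have hB1 : IsBool Q₁ := bool_ind S
          have hM1 : IsMonotone Q₁ := mono_ind S
          have hB2 : IsBool Q₂ := bool_ind2 ((MinWin Q).erase S)
          have hM2 : IsMonotone Q₂ := mono_ind2 ((MinWin Q).erase S)
          have hQmax : Q = fun W => max (Q₁ W) (Q₂ W) := by
            rw [hQ1, hQ2]; exact decomp_max hB hM hS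
          have hcard2 : (MinWin Q₂).card ≤ n := by
            have hsub : MinWin Q₂ ⊆ (MinWin Q).erase S := by
              rw [hQ2]; exact minwin_Q2_subset Q S
            calc (MinWin Q₂).card ≤ ((MinWin Q).erase S).card := Finset.card_le_card hsub
              _ = (MinWin Q).card - 1 := Finset.card_erase_of_mem hS
              _ ≤ n := by omega
          have hcardmin : (MinWin (fun W => min (Q₁ W) (Q₂ W))).card ≤ n := by
            have hsub : MinWin (fun W => min (Q₁ W) (Q₂ W))
                ⊆ ((MinWin Q).erase S).image (fun T => S ∪ T) := by
              rw [hQ1, hQ2]; exact minwin_min_subset Q S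
            calc (MinWin (fun W => min (Q₁ W) (Q₂ W))).card
                ≤ (((MinWin Q).erase S).image (fun T => S ∪ T)).card :=
                  Finset.card_le_card hsub
              _ ≤ ((MinWin Q).erase S).card := Finset.card_image_le
              _ ≤ n := by rw [Finset.card_erase_of_mem hS]; omega
          have hlin := hLIN Q₁ Q₂ hB1 hM1 hB2 hM2 τ hτ
          have hnulin := nu_lin Den Dex p Q₁ Q₂ τ
          have e1 : ψ Q₁ τ = nuCE Den Dex p Q₁ τ := by
            rw [hQ1]; exact base S τ hτ
          have e2 := ih Q₂ hB2 hM2 hcard2 τ hτ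
          have e3 := ih (fun W => min (Q₁ W) (Q₂ W)) (bool_min hB1 hB2)
            (mono_min hM1 hM2) hcardmin τ hτ
          rw [hQmax]
          linarith
  intro Q hB hM τ hτ
  rw [CE_eq_nu Den Dex hunion hdisj p hexo Q τ hτ]
  exact main (MinWin Q).card Q hB hM le_rfl τ hτ
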